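/- If Y is a Bernoulli random variable with parameter p whose binary entropy satisfies H(Y) ≥ 1 − γ for some 0 ≤ γ ≤ 1/4, then |p − 1/2| ≤ √(5γ·ln(4)/16). -/

import Mathlib

open Real

lemma aux_logA (u : ℝ) (hu : 0 ≤ u) :
    u - u^2/2 + u^3/3 - u^4/4 ≤ Real.log (1+u) := by
  set f : ℝ → ℝ := fun x => Real.log (1+x) - (x - x^2/2 + x^3/3 - x^4/4) with hf
  have hd : ∀ x : ℝ, 0 < x → HasDerivAt f (x^4/(1+x)) x := by
    intro x hx
    have h1 : HasDerivAt (fun x : ℝ => Real.log (1+x)) ((1+x)⁻¹ * 1) x := by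
      exact (Real.hasDerivAt_log (by linarith)).comp x ((hasDerivAt_id x).const_add 1)
    have h2 : HasDerivAt (fun x : ℝ => x - x^2/2 + x^3/3 - x^4/4)
        (1 - (2*x^(2-1))/2 + (3*x^(3-1))/3 - (4*x^(4-1))/4) x := by
      exact (((hasDerivAt_id x).sub ((hasDerivAt_pow 2 x).div_const 2)).add
        ((hasDerivAt_pow 3 x).div_const 3)).sub ((hasDerivAt_pow 4 x).div_const 4)
    have := h1.sub h2
    refine HasDerivAt.congr_deriv this ?_
    have hne : (1:ℝ)+x ≠ 0 := by linarith
    field_simp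
    ring
  have hmono : MonotoneOn f (Set.Ici 0) := by
    apply monotoneOn_of_deriv_nonneg (convex_Ici 0)
    · intro x hx
      simp only [Set.mem_Ici] at hx
      apply ContinuousWithinAt.sub
      · exact ((Real.continuousAt_log (by linarith)).comp
          (by fun_prop)).continuousWithinAt
      · exact (Continuous.continuousWithinAt (by continuity))
    · intro x hx
      rw [interior_Ici] at hx
      exact ((hd x hx).differentiableAt).differentiableWithinAt
    · intro x hx
      rw [interior_Ici] at hx
      rw [(hd x hx).deriv]
      exact div_nonneg (by positivity) (by have := Set.mem_Ioi.mp hx; linarith)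
  have h0 : f 0 ≤ f u := hmono (by simp) (by simpa using hu) hu
  simp only [hf] at h0
  norm_num at h0
  linarith

lemma aux_logB (u : ℝ) (hu0 : 0 ≤ u) (hu1 : u < 1) :
    -u - u^2/2 - u^3/3 - u^4/(4*(1-u)) ≤ Real.log (1-u) := by
  set f : ℝ → ℝ := fun x => Real.log (1-x) + (x + x^2/2 + x^3/3 + x^4/(4*(1-x))) with hf
  have hd : ∀ x : ℝ, x ∈ Set.Ioo (0:ℝ) 1 → HasDerivAt f (x^4/(4*(1-x)^2)) x := by
    intro x hx
    obtain ⟨hx0, hx1⟩ := hx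
    have hne : (1:ℝ)-x ≠ 0 := by intro h; nlinarith
    have hne4 : (4:ℝ)*(1-x) ≠ 0 := by
      have : (0:ℝ) < 4*(1-x) := by nlinarith
      exact this.ne'
    have h1 : HasDerivAt (fun x : ℝ => Real.log (1-x)) ((1-x)⁻¹ * (-1)) x := by
      exact (Real.hasDerivAt_log hne).comp x ((hasDerivAt_id x).const_sub 1)
    have h2 : HasDerivAt (fun x : ℝ => x + x^2/2 + x^3/3 + x^4/(4*(1-x)))
        (1 + (2*x^(2-1))/2 + (3*x^(3-1))/3 +
          ((4*x^(4-1)) * (4*(1-x)) - x^4 * (4*(-1))) / (4*(1-x))^2) x := by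
      refine (((hasDerivAt_id x).add ((hasDerivAt_pow 2 x).div_const 2)).add
        ((hasDerivAt_pow 3 x).div_const 3)).add ?_
      exact (hasDerivAt_pow 4 x).div (((hasDerivAt_id x).const_sub 1).const_mul 4) hne4
    have := h1.add h2
    refine HasDerivAt.congr_deriv this ?_
    field_simp
    ring
  have hmono : MonotoneOn f (Set.Ico 0 1) := by
    apply monotoneOn_of_deriv_nonneg (convex_Ico 0 1)
    · intro x hx
      obtain ⟨hx0, hx1⟩ := hx
      apply ContinuousWithinAt.add
      · exact ((Real.continuousAt_log (by intro h; nlinarith)).comp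
          (by fun_prop)).continuousWithinAt
      · apply ContinuousWithinAt.add (Continuous.continuousWithinAt (by continuity))
        apply ContinuousWithinAt.div (Continuous.continuousWithinAt (by continuity))
          (Continuous.continuousWithinAt (by continuity))
        have : (0:ℝ) < 4*(1-x) := by nlinarith
        exact this.ne'
    · intro x hx
      rw [interior_Ico] at hx
      exact ((hd x hx).differentiableAt).differentiableWithinAt
    · intro x hx
      rw [interior_Ico] at hx
      rw [(hd x hx).deriv]
      have : (0:ℝ) < 4*(1-x)^2 := by nlinarith [hx.2]
      exact div_nonneg (by positivity) this.le
  have h0 : f 0 ≤ f u := hmono (by constructor <;> norm_num) ⟨hu0, hu1⟩ hu0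
  simp only [hf] at h0
  norm_num at h0
  linarith

set_option maxHeartbeats 1000000 in
lemma key_pinsker (u γ : ℝ) (hu0 : 0 ≤ u) (hu1 : u < 1) (hγ0 : 0 ≤ γ) (hγ : γ ≤ 1/4)
    (h : (1+u)/2 * Real.log (1+u) + (1-u)/2 * Real.log (1-u) ≤ γ * Real.log 2) :
    u^2/4 ≤ 5 * γ * Real.log 2 / 8 := by
  have hA := aux_logA u hu0
  have hB := aux_logB u hu0 hu1
  have e1 : (1+u)/2 * (u - u^2/2 + u^3/3 - u^4/4) ≤ (1+u)/2 * Real.log (1+u) :=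
    mul_le_mul_of_nonneg_left hA (by linarith)
  have e2 : (1-u)/2 * (-u - u^2/2 - u^3/3 - u^4/(4*(1-u))) ≤ (1-u)/2 * Real.log (1-u) :=
    mul_le_mul_of_nonneg_left hB (by linarith)
  have e3 : (1-u)/2 * (-u - u^2/2 - u^3/3 - u^4/(4*(1-u)))
      = (1-u)/2 * (-u - u^2/2 - u^3/3) - u^4/8 := by
    have hne : (1:ℝ)-u ≠ 0 := by intro h'; nlinarith
    field_simp
    ring
  have hKL : u^2/2 + u^4/12 - u^5/8 ≤ γ * Real.log 2 := by nlinarith [e1, e2, e3, h]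
  have l1 : Real.log 2 < 0.6931471808 := Real.log_two_lt_d9
  have l2 : (0.6931471803:ℝ) < Real.log 2 := Real.log_two_gt_d9
  rcases le_or_gt u (2/3) with hc | hc
  · have hpos : 0 ≤ u^4/12 - u^5/8 := by nlinarith [pow_nonneg hu0 4]
    have : u^2/2 ≤ γ * Real.log 2 := by linarith
    nlinarith [mul_nonneg hγ0 (le_of_lt (lt_trans (by norm_num) l2))]
  · exfalso
    have hq : 0 ≤ -u^4/8 + u/2 + 1/3 := by
      nlinarith [mul_nonneg (sub_nonneg.2 hu1.le) (by positivity : (0:ℝ) ≤ 1+u+u^2+u^3)]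
    have hbig : (2:ℝ)/9 ≤ u^2/2 + u^4/12 - u^5/8 := by
      nlinarith [mul_nonneg (sub_nonneg.2 hc.le) hq]
    have : γ * Real.log 2 ≤ 1/4 * Real.log 2 := by
      apply mul_le_mul_of_nonneg_right hγ (by linarith)
    linarith

theorem bern_high_entropy_param (p γ : ℝ) (hp0 : 0 ≤ p) (hp1 : p ≤ 1)
    (hγ0 : 0 ≤ γ) (hγ : γ ≤ 1 / 4)
    (hent : 1 - γ ≤ p * Real.logb 2 p⁻¹ + (1 - p) * Real.logb 2 (1 - p)⁻¹) :
    |p - 1 / 2| ≤ Real.sqrt (5 * γ * Real.log 4 / 16) := by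
  have hlog2 : (0:ℝ) < Real.log 2 := Real.log_pos (by norm_num)
  -- rule out p = 0 and p = 1
  have hp0' : 0 < p := by
    rcases hp0.lt_or_eq with h | h
    · exact h
    · exfalso; rw [← h] at hent; norm_num at hent; linarith
  have hp1' : p < 1 := by
    rcases hp1.lt_or_eq with h | h
    · exact h
    · exfalso; rw [h] at hent; norm_num at hent; linarith
  -- convert to natural log
  have hent' : (1 - γ) * Real.log 2 ≤ -(p * Real.log p) - (1-p) * Real.log (1-p) := by
    have := mul_le_mul_of_nonneg_right hent hlog2.le
    rw [Real.logb, Real.logb, Real.log_inv, Real.log_inv] at this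
    calc (1-γ) * Real.log 2 ≤ (p * (-Real.log p / Real.log 2)
          + (1-p) * (-Real.log (1-p) / Real.log 2)) * Real.log 2 := this
      _ = -(p * Real.log p) - (1-p) * Real.log (1-p) := by
          field_simp; ring
  -- KL bound
  have hKL : p * Real.log p + (1-p) * Real.log (1-p) + Real.log 2 ≤ γ * Real.log 2 := by
    nlinarith [hent']
  set u : ℝ := |2*p - 1| with hu
  have hu0 : 0 ≤ u := abs_nonneg _
  have hu1 : u < 1 := by
    rw [hu, abs_lt]; constructor <;> linarith
  have hform : (1+u)/2 * Real.log (1+u) + (1-u)/2 * Real.log (1-u) ≤ γ * Real.log 2 := by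
    rcases le_or_gt p (1/2) with hc | hc
    · have huv : u = 1 - 2*p := by rw [hu, abs_of_nonpos (by linarith)]; ring
      have h1 : Real.log (1+u) = Real.log 2 + Real.log (1-p) := by
        rw [huv, show (1:ℝ) + (1-2*p) = 2*(1-p) by ring,
          Real.log_mul (by norm_num) (by linarith)]
      have h2 : Real.log (1-u) = Real.log 2 + Real.log p := by
        rw [huv, show (1:ℝ) - (1-2*p) = 2*p by ring,
          Real.log_mul (by norm_num) (by linarith)]
      rw [h1, h2, huv]
      calc (1+(1-2*p))/2 * (Real.log 2 + Real.log (1-p))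
            + (1-(1-2*p))/2 * (Real.log 2 + Real.log p)
          = p * Real.log p + (1-p) * Real.log (1-p) + Real.log 2 := by ring
        _ ≤ γ * Real.log 2 := hKL
    · have huv : u = 2*p - 1 := by rw [hu, abs_of_pos (by linarith)]
      have h1 : Real.log (1+u) = Real.log 2 + Real.log p := by
        rw [huv, show (1:ℝ) + (2*p-1) = 2*p by ring,
          Real.log_mul (by norm_num) (by linarith)]
      have h2 : Real.log (1-u) = Real.log 2 + Real.log (1-p) := by
        rw [huv, show (1:ℝ) - (2*p-1) = 2*(1-p) by ring,
          Real.log_mul (by norm_num) (by linarith)]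
      rw [h1, h2, huv]
      calc (1+(2*p-1))/2 * (Real.log 2 + Real.log p)
            + (1-(2*p-1))/2 * (Real.log 2 + Real.log (1-p))
          = p * Real.log p + (1-p) * Real.log (1-p) + Real.log 2 := by ring
        _ ≤ γ * Real.log 2 := hKL
  have hkey := key_pinsker u γ hu0 hu1 hγ0 hγ hform
  have hlog4 : Real.log 4 = 2 * Real.log 2 := by
    rw [show (4:ℝ) = 2^2 by norm_num, Real.log_pow]; push_cast; ring
  rw [← Real.sqrt_sq_eq_abs]
  apply Real.sqrt_le_sqrt
  have : (p - 1/2)^2 = u^2/4 := by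
    rw [hu, sq_abs]; ring
  rw [this, hlog4]
  linarith
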